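/- Let n ≥ 2 be an integer, let c_1, …, c_{2n−1} and d_k = (−1)^k c_k be as defined, and let u ∈ H²(ℝ) attain its maximum over ℝ at a point ξ with M = u(ξ). Suppose u ∈ L^{2n+2}(ℝ) and u' ∈ L^{2n+2}(ℝ). Then ∫_{−∞}^{ξ} (u − u')²·( u^{2n} + Σ_{k=1}^{2n−1} c_k·u^{2n−k}·u'^k + (−1)^n·u'^{2n}/(2n+1) ) dx + ∫_{ξ}^{∞} (u + u')²·( u^{2n} + Σ_{k=1}^{2n−1} d_k·u^{2n−k}·u'^k + (−1)^n·u'^{2n}/(2n+1) ) dx = F(u) − ((2 − c_1)/(n+1))·M^{2n+2}. -/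

import Mathlib

open MeasureTheory Filter Finset ENNReal

/-- The coefficients `c_k`, `k = 1, …, 2n−1`, of the auxiliary function `h`:
`c₁ = 1/2 + Σ_{j=1}^{n+1} (−1)^{j+1}·((2j−3)/(2(2j−1)))·C(n+1,j)`;
`c_{2m} = Σ_{j=m+1}^{n+1} (−1)^{j+1}·((2j−2m−1)/(2j−1))·C(n+1,j)` for `m = 1,…,n−1`;
`c_{2m−1} = Σ_{j=m+1}^{n+1} (−1)^{j+1}·((2j−2m)/(2j−1))·C(n+1,j)` for `m = 2,…,n`. -/
noncomputable def gmchC (n k : ℕ) : ℝ :=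
  if k = 1 then
    1 / 2 + ∑ j ∈ Finset.Icc 1 (n + 1),
      (-1 : ℝ) ^ (j + 1) * ((2 * (j : ℝ) - 3) / (2 * (2 * (j : ℝ) - 1))) * ((n + 1).choose j : ℝ)
  else
    ∑ j ∈ Finset.Icc ((k + 1) / 2 + 1) (n + 1),
      (-1 : ℝ) ^ (j + 1) * ((2 * (j : ℝ) - ((k : ℝ) + 1)) / (2 * (j : ℝ) - 1)) *
        ((n + 1).choose j : ℝ)

/-- The coefficients `d_k = (−1)^k·c_k`, `k = 1, …, 2n−1`. -/
noncomputable def gmchD (n k : ℕ) : ℝ := (-1 : ℝ) ^ k * gmchC n k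

noncomputable def gA (n m : ℕ) : ℝ :=
  ∑ j ∈ Finset.Icc (m+1) (n+1),
    (-1:ℝ)^(j+1) * ((2*(j:ℝ) - (2*(m:ℝ)+1))/(2*(j:ℝ)-1)) * ((n+1).choose j : ℝ)
noncomputable def gB (n m : ℕ) : ℝ :=
  ∑ j ∈ Finset.Icc (m+1) (n+1),
    (-1:ℝ)^(j+1) * ((2*(j:ℝ) - 2*(m:ℝ))/(2*(j:ℝ)-1)) * ((n+1).choose j : ℝ)
noncomputable def gE (n k : ℕ) : ℝ := if k % 2 = 0 then gA n (k/2) else gB n (k/2 + 1)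

lemma Icc_peel {m N : ℕ} (h : m ≤ N) (f : ℕ → ℝ) :
    ∑ j ∈ Finset.Icc m N, f j = f m + ∑ j ∈ Finset.Icc (m+1) N, f j := by
  rw [Finset.Icc_eq_cons_Ioc h, Finset.sum_cons, Finset.Icc_add_one_left_eq_Ioc]

lemma alt_sum (n : ℕ) :
    ∑ j ∈ Finset.Icc 1 (n+1), (-1:ℝ)^(j+1) * ((n+1).choose j : ℝ) = 1 := by
  have h0 : ∑ j ∈ Finset.Icc 0 (n+1), (-1:ℝ)^j * ((n+1).choose j : ℝ) = 0 := by
    have := Int.alternating_sum_range_choose_of_ne (n := n+1) (by omega)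
    have h2 : ((∑ i ∈ range (n+2), (-1:ℤ)^i * ((n+1).choose i : ℤ) : ℤ) : ℝ) = 0 := by
      rw [this]; norm_num
    push_cast at h2
    rw [← h2, ← Finset.Ico_add_one_right_eq_Icc, ← Finset.range_eq_Ico]
    rfl
  rw [Icc_peel (by omega)] at h0
  simp only [pow_zero, Nat.choose_zero_right, Nat.cast_one, one_mul] at h0
  have : ∑ j ∈ Finset.Icc 1 (n+1), (-1:ℝ)^(j+1) * ((n+1).choose j : ℝ)
      = - ∑ j ∈ Finset.Icc 1 (n+1), (-1:ℝ)^j * ((n+1).choose j : ℝ) := by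
    rw [← Finset.sum_neg_distrib]
    exact Finset.sum_congr rfl fun j _ => by ring
  rw [this]; linarith

lemma den_ne {j : ℕ} (h : 1 ≤ j) : 2*(j:ℝ) - 1 ≠ 0 := by
  have : (1:ℝ) ≤ (j:ℝ) := by exact_mod_cast h
  nlinarith

lemma gE_even (n m : ℕ) : gE n (2*m) = gA n m := by
  simp [gE, Nat.mul_mod_right, Nat.mul_div_cancel_left m (by norm_num : 0 < 2)]

lemma gE_odd (n m : ℕ) : gE n (2*m+1) = gB n (m+1) := by
  have h1 : (2*m+1) % 2 = 1 := by omega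
  have h2 : (2*m+1) / 2 = m := by omega
  simp [gE, h1, h2]

lemma gB_empty (n : ℕ) : gB n (n+1) = 0 := by
  unfold gB
  rw [Finset.Icc_eq_empty (by omega), Finset.sum_empty]

-- c₁ = gB n 1
lemma gmchC_one (n : ℕ) (hn : 1 ≤ n) : gmchC n 1 = gB n 1 := by
  have halt := alt_sum n
  rw [Icc_peel (show 1 ≤ n+1 by omega)] at halt
  simp only [pow_succ, pow_one, Nat.choose_one_right] at halt
  -- halt : (-1)^1*(-1) * (n+1) + ∑_{Icc 2 (n+1)} (-1)^(j+1) * C = 1  (roughly)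
  unfold gmchC gB
  rw [if_pos rfl]
  rw [Icc_peel (show 1 ≤ n+1 by omega)]
  have tw : ∑ j ∈ Finset.Icc (1+1) (n+1),
      (-1:ℝ)^(j+1) * ((2*(j:ℝ) - 3) / (2*(2*(j:ℝ)-1))) * ((n+1).choose j : ℝ)
      = ∑ j ∈ Finset.Icc (1+1) (n+1),
        ((-1:ℝ)^(j+1) * ((2*(j:ℝ) - 2*(1:ℝ))/(2*(j:ℝ)-1)) * ((n+1).choose j : ℝ)
          - (-1:ℝ)^(j+1) * ((n+1).choose j : ℝ) / 2) := by
    refine Finset.sum_congr rfl fun j hj => ?_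
    have hj1 : 1 ≤ j := by have := (Finset.mem_Icc.mp hj).1; omega
    have hd := den_ne hj1
    field_simp
    ring
  rw [tw, Finset.sum_sub_distrib]
  have hsplit : ∑ j ∈ Finset.Icc (1+1) (n+1), (-1:ℝ)^(j+1) * ((n+1).choose j : ℝ)
      = 1 - ((n:ℝ)+1) := by
    have h1 : ∑ j ∈ Finset.Icc 1 (n+1), (-1:ℝ)^(j+1) * ((n+1).choose j : ℝ) = 1 := alt_sum n
    rw [Icc_peel (show 1 ≤ n+1 by omega)] at h1
    have : ((-1:ℝ))^(1+1) * ((n+1).choose 1 : ℝ) = (n:ℝ)+1 := by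
      rw [Nat.choose_one_right]; push_cast; ring
    rw [this] at h1
    linarith
  have hsumdiv : ∑ j ∈ Finset.Icc (1+1) (n+1), (-1:ℝ)^(j+1) * ((n+1).choose j : ℝ) / 2
      = (∑ j ∈ Finset.Icc (1+1) (n+1), (-1:ℝ)^(j+1) * ((n+1).choose j : ℝ)) / 2 := by
    rw [Finset.sum_div]
  rw [hsumdiv, hsplit]
  have hc1 : ((n+1).choose 1 : ℝ) = (n:ℝ)+1 := by rw [Nat.choose_one_right]; push_cast; ring
  push_cast [hc1]
  ring
lemma gA_zero (n : ℕ) : gA n 0 = 1 := by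
  unfold gA
  have h : ∀ j ∈ Finset.Icc (0+1) (n+1),
      (-1:ℝ)^(j+1) * ((2*(j:ℝ) - (2*((0:ℕ):ℝ)+1))/(2*(j:ℝ)-1)) * ((n+1).choose j : ℝ)
      = (-1:ℝ)^(j+1) * ((n+1).choose j : ℝ) := ?_
  · rw [Finset.sum_congr rfl h]
    exact alt_sum n
  intro j hj
  have hj1 : 1 ≤ j := (Finset.mem_Icc.mp hj).1
  have hd := den_ne hj1
  push_cast
  rw [show (2*(j:ℝ)-(2*0+1)) = 2*(j:ℝ)-1 by ring, div_self hd, mul_one]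

lemma gA_top (n : ℕ) : gA n n = (-1:ℝ)^n / (2*(n:ℝ)+1) := by
  unfold gA
  rw [Finset.Icc_self, Finset.sum_singleton, Nat.choose_self]
  have hd : 2*((n:ℝ)+1) - 1 ≠ 0 := by push_cast; nlinarith [Nat.cast_nonneg (α := ℝ) n]
  push_cast
  rw [pow_add]
  field_simp
  ring

lemma rodd (n m : ℕ) (h2 : m ≤ n) :
    gB n (m+1) - 2 * gA n m + gB n m = 0 := by
  unfold gA gB
  rw [Icc_peel (show m+1 ≤ n+1 by omega), Icc_peel (show m+1 ≤ n+1 by omega)]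
  have e1 : ∑ j ∈ Finset.Icc (m+1+1) (n+1),
      (-1:ℝ)^(j+1) * ((2*(j:ℝ) - 2*((m:ℝ)+1))/(2*(j:ℝ)-1)) * ((n+1).choose j : ℝ)
      = 2 * ∑ j ∈ Finset.Icc (m+1+1) (n+1),
          (-1:ℝ)^(j+1) * ((2*(j:ℝ) - (2*(m:ℝ)+1))/(2*(j:ℝ)-1)) * ((n+1).choose j : ℝ)
        - ∑ j ∈ Finset.Icc (m+1+1) (n+1),
          (-1:ℝ)^(j+1) * ((2*(j:ℝ) - 2*(m:ℝ))/(2*(j:ℝ)-1)) * ((n+1).choose j : ℝ) := by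
    rw [Finset.mul_sum, ← Finset.sum_sub_distrib]
    refine Finset.sum_congr rfl fun j hj => ?_
    have hj1 : 1 ≤ j := by have := (Finset.mem_Icc.mp hj).1; omega
    have hd := den_ne hj1
    field_simp
    ring
  push_cast at e1 ⊢
  rw [e1]
  have hd : 2*((m:ℝ)+1) - 1 ≠ 0 := by nlinarith [Nat.cast_nonneg (α := ℝ) m]
  field_simp
  ring

lemma reven (n m : ℕ) (h2 : m ≤ n) :
    gA n (m+1) - 2 * gB n (m+1) + gA n m
      = (-1:ℝ)^m * ((n+1).choose (m+1) : ℝ) / (2*(m:ℝ)+1) := by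
  unfold gA gB
  rw [Icc_peel (show m+1 ≤ n+1 by omega)]
  have e1 : ∑ j ∈ Finset.Icc (m+1+1) (n+1),
      (-1:ℝ)^(j+1) * ((2*(j:ℝ) - (2*((m:ℝ)+1)+1))/(2*(j:ℝ)-1)) * ((n+1).choose j : ℝ)
      = 2 * ∑ j ∈ Finset.Icc (m+1+1) (n+1),
          (-1:ℝ)^(j+1) * ((2*(j:ℝ) - 2*((m:ℝ)+1))/(2*(j:ℝ)-1)) * ((n+1).choose j : ℝ)
        - ∑ j ∈ Finset.Icc (m+1+1) (n+1),
          (-1:ℝ)^(j+1) * ((2*(j:ℝ) - (2*(m:ℝ)+1))/(2*(j:ℝ)-1)) * ((n+1).choose j : ℝ) := by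
    rw [Finset.mul_sum, ← Finset.sum_sub_distrib]
    refine Finset.sum_congr rfl fun j hj => ?_
    have hj1 : 1 ≤ j := by have := (Finset.mem_Icc.mp hj).1; omega
    have hd := den_ne hj1
    field_simp
    ring
  push_cast at e1 ⊢
  rw [e1]
  have hd : 2*((m:ℝ)+1) - 1 ≠ 0 := by nlinarith [Nat.cast_nonneg (α := ℝ) m]
  have hd2 : 2*(m:ℝ)+1 ≠ 0 := by nlinarith [Nat.cast_nonneg (α := ℝ) m]
  rw [pow_add]
  field_simp
  ring

lemma gmchC_eq_gE (n k : ℕ) (hn : 1 ≤ n) (h1 : 1 ≤ k) (h2 : k ≤ 2*n-1) :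
    gmchC n k = gE n k := by
  rcases Nat.even_or_odd k with hk | hk
  · obtain ⟨m, hm⟩ := hk
    have hm1 : 1 ≤ m := by omega
    rw [show k = 2*m by omega, gE_even]
    unfold gmchC gA
    rw [if_neg (by omega)]
    rw [show (2*m+1)/2 + 1 = m+1 by omega]
    refine Finset.sum_congr rfl fun j hj => ?_
    push_cast
    ring
  · obtain ⟨m, hm⟩ := hk
    rcases Nat.eq_zero_or_pos m with h0 | hpos
    · rw [show k = 1 by omega, gmchC_one n hn]
      have h := gE_odd n 0
      norm_num at h
      rw [h]
    · rw [show k = 2*m+1 by omega, gE_odd]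
      unfold gmchC gB
      rw [if_neg (by omega)]
      rw [show (2*m+1+1)/2 + 1 = m+1+1 by omega]
      refine Finset.sum_congr rfl fun j hj => ?_
      push_cast
      ring

lemma sum_two_mul (N : ℕ) (F : ℕ → ℝ) :
    ∑ k ∈ Finset.range (2*N), F k = ∑ m ∈ Finset.range N, (F (2*m) + F (2*m+1)) := by
  induction N with
  | zero => simp
  | succ N ih =>
      rw [Finset.sum_range_succ, ← ih, show 2*(N+1) = (2*N+1)+1 by ring,
        Finset.sum_range_succ, Finset.sum_range_succ]
      ring

lemma keyid (n : ℕ) (hn : 2 ≤ n) (a b : ℝ) :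
    (a - b)^2 * (a^(2*n) + (∑ k ∈ Finset.Icc 1 (2*n-1), gmchC n k * a^(2*n-k) * b^k)
      + (-1:ℝ)^n * b^(2*n) / (2*(n:ℝ)+1))
    = (a^(2*n+2) + (∑ k ∈ Finset.Icc 1 n,
          (-1:ℝ)^(k+1) / (2*(k:ℝ)-1) * ((n+1).choose k : ℝ) * a^(2*n-2*k+2) * b^(2*k))
        + (-1:ℝ)^n * b^(2*n+2) / (2*(n:ℝ)+1))
      - (2 - gmchC n 1) * a^(2*n+1) * b := by
  obtain ⟨N, hN⟩ : ∃ N, 2*n = N+1 := ⟨2*n-1, by omega⟩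
  have hE0 : gE n 0 = 1 := by
    have h := gE_even n 0
    norm_num at h
    rw [h, gA_zero]
  have hE1 : gE n 1 = gmchC n 1 := by
    rw [gmchC_one n (by omega)]
    have h := gE_odd n 0
    norm_num at h
    rw [h]
  have hEN1 : gE n (N+1) = (-1:ℝ)^n/(2*(n:ℝ)+1) := by
    rw [← hN, gE_even, gA_top]
  have hEN : gE n N = 2 * gE n (N+1) := by
    have h1 := rodd n n le_rfl
    have h2 : gE n N = gB n n := by
      rw [show N = 2*(n-1)+1 by omega, gE_odd, show n-1+1 = n by omega]
    have h3 : gE n (N+1) = gA n n := by rw [← hN, gE_even]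
    rw [h2, h3]
    rw [gB_empty] at h1
    linarith
  rw [hN, show N+1-1 = N by omega]
  have hbr : a^(N+1) + (∑ k ∈ Finset.Icc 1 N, gmchC n k * a^(N+1-k) * b^k)
      + (-1:ℝ)^n * b^(N+1) / (2*(n:ℝ)+1)
      = ∑ k ∈ Finset.range (N+1+1), gE n k * a^(N+1-k) * b^k := by
    rw [Finset.sum_range_succ']
    rw [Finset.sum_range_succ]
    rw [← Finset.Ico_add_one_right_eq_Icc, Finset.sum_Ico_eq_sum_range,
      show N+1-1 = N by omega]
    have t0 : gE n 0 * a^(N+1-0) * b^0 = a^(N+1) := by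
      rw [hE0]; norm_num
    have tN : gE n (N+1) * a^(N+1-(N+1)) * b^(N+1) = (-1:ℝ)^n * b^(N+1) / (2*(n:ℝ)+1) := by
      rw [hEN1, Nat.sub_self, pow_zero]
      ring
    rw [t0, tN]
    have hmidsum : ∑ i ∈ Finset.range N, gmchC n (1+i) * a^(N+1-(1+i)) * b^(1+i)
        = ∑ k ∈ Finset.range N, gE n (k+1) * a^(N+1-(k+1)) * b^(k+1) := by
      refine Finset.sum_congr rfl fun i hi => ?_
      have hi' : i < N := Finset.mem_range.mp hi
      rw [show 1+i = i+1 by ring]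
      rw [gmchC_eq_gE n (i+1) (by omega) (by omega) (by omega)]
    rw [hmidsum]
    ring
  rw [hbr]
  have expand : (a - b)^2 * ∑ k ∈ Finset.range (N+1+1), gE n k * a^(N+1-k) * b^k
      = (∑ k ∈ Finset.range (N+1+1), gE n k * a^(N+1+2-k) * b^k)
        - 2 * (∑ k ∈ Finset.range (N+1+1), gE n k * a^(N+1+1-k) * b^(k+1))
        + (∑ k ∈ Finset.range (N+1+1), gE n k * a^(N+1-k) * b^(k+2)) := by
    rw [Finset.mul_sum, Finset.mul_sum, ← Finset.sum_sub_distrib, ← Finset.sum_add_distrib]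
    refine Finset.sum_congr rfl fun k hk => ?_
    have hk' : k < N+1+1 := Finset.mem_range.mp hk
    rw [show N+1+2-k = (N+1-k)+2 by omega, show N+1+1-k = (N+1-k)+1 by omega,
      pow_add, pow_add]
    ring
  rw [expand]
  have hS1 : (∑ k ∈ Finset.range (N+1+1), gE n k * a^(N+1+2-k) * b^k)
      = (∑ k ∈ Finset.range N, gE n (k+2) * a^(N+1-k) * b^(k+2))
        + gE n 1 * a^(N+1+1) * b + gE n 0 * a^(N+1+2) := by
    rw [Finset.sum_range_succ', Finset.sum_range_succ']
    have h1 : ∀ k ∈ Finset.range N, gE n (k+1+1) * a^(N+1+2-(k+1+1)) * b^(k+1+1)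
        = gE n (k+2) * a^(N+1-k) * b^(k+2) := by
      intro k hk
      have hk' : k < N := Finset.mem_range.mp hk
      rw [show k+1+1 = k+2 by omega, show N+1+2-(k+2) = N+1-k by omega]
    rw [Finset.sum_congr rfl h1]
    norm_num
  have hS2 : (∑ k ∈ Finset.range (N+1+1), gE n k * a^(N+1+1-k) * b^(k+1))
      = (∑ k ∈ Finset.range N, gE n (k+1) * a^(N+1-k) * b^(k+2))
        + gE n (N+1) * a * b^(N+2) + gE n 0 * a^(N+1+1) * b := by
    rw [Finset.sum_range_succ', Finset.sum_range_succ]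
    have h1 : ∀ k ∈ Finset.range N, gE n (k+1) * a^(N+1+1-(k+1)) * b^(k+1+1)
        = gE n (k+1) * a^(N+1-k) * b^(k+2) := by
      intro k hk
      have hk' : k < N := Finset.mem_range.mp hk
      rw [show k+1+1 = k+2 by omega, show N+1+1-(k+1) = N+1-k by omega]
    rw [Finset.sum_congr rfl h1]
    have h2 : gE n (N+1) * a^(N+1+1-(N+1)) * b^(N+1+1) = gE n (N+1) * a * b^(N+2) := by
      rw [show N+1+1-(N+1) = 1 by omega, show N+1+1 = N+2 by omega, pow_one]
    rw [h2]
    norm_num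
  have hS3 : (∑ k ∈ Finset.range (N+1+1), gE n k * a^(N+1-k) * b^(k+2))
      = (∑ k ∈ Finset.range N, gE n k * a^(N+1-k) * b^(k+2))
        + gE n N * a * b^(N+2) + gE n (N+1) * b^(N+3) := by
    rw [Finset.sum_range_succ, Finset.sum_range_succ]
    have h2 : gE n (N+1) * a^(N+1-(N+1)) * b^(N+1+2) = gE n (N+1) * b^(N+3) := by
      rw [Nat.sub_self, show N+1+2 = N+3 by omega, pow_zero]
      ring
    have h3 : gE n N * a^(N+1-N) * b^(N+2) = gE n N * a * b^(N+2) := by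
      rw [show N+1-N = 1 by omega, pow_one]
    rw [h2, h3]
  rw [hS1, hS2, hS3]
  have hmid : (∑ k ∈ Finset.range N, gE n (k+2) * a^(N+1-k) * b^(k+2))
      - 2 * (∑ k ∈ Finset.range N, gE n (k+1) * a^(N+1-k) * b^(k+2))
      + (∑ k ∈ Finset.range N, gE n k * a^(N+1-k) * b^(k+2))
      = ∑ m ∈ Finset.range n,
          (-1:ℝ)^m * ((n+1).choose (m+1) : ℝ) / (2*(m:ℝ)+1) * (a^(N+1-2*m) * b^(2*m+2)) := by
    rw [Finset.mul_sum, ← Finset.sum_sub_distrib, ← Finset.sum_add_distrib]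
    have hext : ∑ k ∈ Finset.range N,
        (gE n (k+2) * a^(N+1-k) * b^(k+2) - 2 * (gE n (k+1) * a^(N+1-k) * b^(k+2))
          + gE n k * a^(N+1-k) * b^(k+2))
        = ∑ k ∈ Finset.range (N+1),
          (gE n (k+2) * a^(N+1-k) * b^(k+2) - 2 * (gE n (k+1) * a^(N+1-k) * b^(k+2))
            + gE n k * a^(N+1-k) * b^(k+2)) := by
      rw [Finset.sum_range_succ]
      have e1 : gE n (N+2) = gB n (n+1) := by
        rw [show N+2 = 2*n+1 by omega, gE_odd]
      have e2 : gE n (N+1) = gA n n := by rw [← hN, gE_even]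
      have e3 : gE n N = gB n n := by
        rw [show N = 2*(n-1)+1 by omega, gE_odd, show n-1+1 = n by omega]
      have hr : gB n (n+1) - 2 * gA n n + gB n n = 0 := rodd n n le_rfl
      have hz : gE n (N+2) * a^(N+1-N) * b^(N+2) - 2 * (gE n (N+1) * a^(N+1-N) * b^(N+2))
          + gE n N * a^(N+1-N) * b^(N+2) = 0 := by
        rw [e1, e2, e3]
        have : (gB n (n+1) - 2 * gA n n + gB n n) * (a^(N+1-N) * b^(N+2)) = 0 := by
          rw [hr]; ring
        calc gB n (n+1) * a^(N+1-N) * b^(N+2) - 2 * (gA n n * a^(N+1-N) * b^(N+2))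
              + gB n n * a^(N+1-N) * b^(N+2)
            = (gB n (n+1) - 2 * gA n n + gB n n) * (a^(N+1-N) * b^(N+2)) := by ring
          _ = 0 := this
      rw [hz, add_zero]
    rw [hext, show N+1 = 2*n by omega, sum_two_mul]
    refine Finset.sum_congr rfl fun m hm => ?_
    have hm' : m < n := Finset.mem_range.mp hm
    have e1 : gE n (2*m+2) = gA n (m+1) := by
      rw [show 2*m+2 = 2*(m+1) by ring, gE_even]
    have e2 : gE n (2*m+1) = gB n (m+1) := gE_odd n m
    have e3 : gE n (2*m) = gA n m := gE_even n m
    have e4 : gE n (2*m+1+2) = gB n (m+1+1) := by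
      rw [show 2*m+1+2 = 2*(m+1)+1 by ring, gE_odd]
    have e5 : gE n (2*m+1+1) = gA n (m+1) := by
      rw [show 2*m+1+1 = 2*(m+1) by ring, gE_even]
    have hrodd : gB n (m+1+1) - 2 * gA n (m+1) + gB n (m+1) = 0 := rodd n (m+1) (by omega)
    have hreven : gA n (m+1) - 2 * gB n (m+1) + gA n m
        = (-1:ℝ)^m * ((n+1).choose (m+1) : ℝ) / (2*(m:ℝ)+1) := reven n m (by omega)
    simp only [e1, e2, e3, e4, e5]
    calc (gA n (m+1) * a^(2*n-2*m) * b^(2*m+2) - 2 * (gB n (m+1) * a^(2*n-2*m) * b^(2*m+2))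
            + gA n m * a^(2*n-2*m) * b^(2*m+2))
          + (gB n (m+1+1) * a^(2*n-(2*m+1)) * b^(2*m+1+2)
            - 2 * (gA n (m+1) * a^(2*n-(2*m+1)) * b^(2*m+1+2))
            + gB n (m+1) * a^(2*n-(2*m+1)) * b^(2*m+1+2))
        = (gA n (m+1) - 2 * gB n (m+1) + gA n m) * (a^(2*n-2*m) * b^(2*m+2))
          + (gB n (m+1+1) - 2 * gA n (m+1) + gB n (m+1)) * (a^(2*n-(2*m+1)) * b^(2*m+1+2)) := by
          ring
      _ = (-1:ℝ)^m * ((n+1).choose (m+1) : ℝ) / (2*(m:ℝ)+1) * (a^(2*n-2*m) * b^(2*m+2)) := by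
          rw [hrodd, hreven]; ring
  have hRHS : (∑ k ∈ Finset.Icc 1 n,
        (-1:ℝ)^(k+1) / (2*(k:ℝ)-1) * ((n+1).choose k : ℝ) * a^(N+1-2*k+2) * b^(2*k))
      = ∑ m ∈ Finset.range n,
          (-1:ℝ)^m * ((n+1).choose (m+1) : ℝ) / (2*(m:ℝ)+1) * (a^(N+1-2*m) * b^(2*m+2)) := by
    rw [← Finset.Ico_add_one_right_eq_Icc, Finset.sum_Ico_eq_sum_range, show n+1-1 = n by omega]
    refine Finset.sum_congr rfl fun i hi => ?_
    have hi' : i < n := Finset.mem_range.mp hi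
    rw [show N+1-2*(1+i)+2 = N+1-2*i by omega, show 2*(1+i) = 2*i+2 by ring,
      show 1+i = i+1 by ring]
    push_cast
    rw [show ((-1:ℝ))^(i+1+1) = (-1:ℝ)^i by rw [show i+1+1 = i+2 by ring, pow_add]; norm_num]
    rw [show 2*((i:ℝ)+1)-1 = 2*(i:ℝ)+1 by ring]
    ring
  rw [hRHS, hE0, hE1, hEN, hEN1]
  linear_combination hmid


lemma keyidD (n : ℕ) (hn : 2 ≤ n) (a b : ℝ) :
    (a + b)^2 * (a^(2*n) + (∑ k ∈ Finset.Icc 1 (2*n-1), gmchD n k * a^(2*n-k) * b^k)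
      + (-1:ℝ)^n * b^(2*n) / (2*(n:ℝ)+1))
    = (a^(2*n+2) + (∑ k ∈ Finset.Icc 1 n,
          (-1:ℝ)^(k+1) / (2*(k:ℝ)-1) * ((n+1).choose k : ℝ) * a^(2*n-2*k+2) * b^(2*k))
        + (-1:ℝ)^n * b^(2*n+2) / (2*(n:ℝ)+1))
      + (2 - gmchC n 1) * a^(2*n+1) * b := by
  have h := keyid n hn a (-b)
  rw [show a - -b = a + b by ring] at h
  have h1 : ∑ k ∈ Finset.Icc 1 (2*n-1), gmchC n k * a^(2*n-k) * (-b)^k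
      = ∑ k ∈ Finset.Icc 1 (2*n-1), gmchD n k * a^(2*n-k) * b^k := by
    refine Finset.sum_congr rfl fun k hk => ?_
    unfold gmchD
    rw [neg_pow]
    ring
  rw [h1] at h
  have h2 : (-b)^(2*n) = b^(2*n) := (even_two_mul n).neg_pow b
  have h4 : (-b)^(2*n+2) = b^(2*n+2) := Even.neg_pow (by exact ⟨n+1, by ring⟩) b
  have h3 : ∑ k ∈ Finset.Icc 1 n,
      (-1:ℝ)^(k+1) / (2*(k:ℝ)-1) * ((n+1).choose k : ℝ) * a^(2*n-2*k+2) * (-b)^(2*k)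
      = ∑ k ∈ Finset.Icc 1 n,
        (-1:ℝ)^(k+1) / (2*(k:ℝ)-1) * ((n+1).choose k : ℝ) * a^(2*n-2*k+2) * b^(2*k) := by
    refine Finset.sum_congr rfl fun k hk => ?_
    rw [(even_two_mul k).neg_pow b]
  rw [h2, h3, h4] at h
  linear_combination h

lemma abs_pow_mul_pow_le (X Y : ℝ) (p q P : ℕ) (h : p + q = P) :
    |X^p * Y^q| ≤ |X|^P + |Y|^P := by
  rw [abs_mul, abs_pow, abs_pow]
  rcases le_total |X| |Y| with hle | hle
  · calc |X|^p * |Y|^q ≤ |Y|^p * |Y|^q := by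
          gcongr
      _ = |Y|^P := by rw [← pow_add, h]
      _ ≤ |X|^P + |Y|^P := le_add_of_nonneg_left (by positivity)
  · calc |X|^p * |Y|^q ≤ |X|^p * |X|^q := by
          gcongr
      _ = |X|^P := by rw [← pow_add, h]
      _ ≤ |X|^P + |Y|^P := le_add_of_nonneg_right (by positivity)

/-- the key identity (3.8). Let `n ≥ 2`, let `c_k`, `d_k = (−1)^k c_k` be as
defined, and let `u ∈ H²(ℝ)` (with derivative `u'`) attain its maximum over `ℝ` at `ξ`, with
`M = u(ξ)`; suppose moreover `u, u' ∈ L^{2n+2}(ℝ)`. Then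
`∫_{−∞}^{ξ} (u − u')²·(u^{2n} + Σ_{k=1}^{2n−1} c_k·u^{2n−k}·u'^k + (−1)^n·u'^{2n}/(2n+1)) dx
  + ∫_{ξ}^{∞} (u + u')²·(u^{2n} + Σ_{k=1}^{2n−1} d_k·u^{2n−k}·u'^k + (−1)^n·u'^{2n}/(2n+1)) dx
  = F(u) − ((2 − c₁)/(n+1))·M^{2n+2}`. -/
theorem stmt9 (n : ℕ) (hn : 2 ≤ n) (u u' : ℝ → ℝ)
    (hderiv : ∀ x, HasDerivAt u (u' x) x)
    (hu'_cont : Continuous u')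
    (hu_mem : MemLp u 2 (volume : Measure ℝ))
    (hu'_mem : MemLp u' 2 (volume : Measure ℝ))
    (hu_top : Tendsto u atTop (nhds 0)) (hu_bot : Tendsto u atBot (nhds 0))
    (hu'_top : Tendsto u' atTop (nhds 0)) (hu'_bot : Tendsto u' atBot (nhds 0))
    (hu_mem' : MemLp u ((2 * n + 2 : ℕ) : ℝ≥0∞) (volume : Measure ℝ))
    (hu'_mem' : MemLp u' ((2 * n + 2 : ℕ) : ℝ≥0∞) (volume : Measure ℝ))
    (ξ M : ℝ) (hmax : ∀ x, u x ≤ u ξ) (hM : M = u ξ) :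
    (∫ x in Set.Iic ξ,
        (u x - u' x) ^ 2 *
          ((u x) ^ (2 * n) +
            (∑ k ∈ Finset.Icc 1 (2 * n - 1), gmchC n k * (u x) ^ (2 * n - k) * (u' x) ^ k) +
            (-1 : ℝ) ^ n * (u' x) ^ (2 * n) / (2 * (n : ℝ) + 1))) +
      (∫ x in Set.Ici ξ,
        (u x + u' x) ^ 2 *
          ((u x) ^ (2 * n) +
            (∑ k ∈ Finset.Icc 1 (2 * n - 1), gmchD n k * (u x) ^ (2 * n - k) * (u' x) ^ k) +
            (-1 : ℝ) ^ n * (u' x) ^ (2 * n) / (2 * (n : ℝ) + 1))) =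
      (∫ x : ℝ,
        ((u x) ^ (2 * n + 2) +
          (∑ k ∈ Finset.Icc 1 n,
            (-1 : ℝ) ^ (k + 1) / (2 * (k : ℝ) - 1) * ((n + 1).choose k : ℝ) *
              (u x) ^ (2 * n - 2 * k + 2) * (u' x) ^ (2 * k)) +
          (-1 : ℝ) ^ n * (u' x) ^ (2 * n + 2) / (2 * (n : ℝ) + 1))) -
        ((2 - gmchC n 1) / ((n : ℝ) + 1)) * M ^ (2 * n + 2) := by
  
  have hu_cont : Continuous u := by
    refine continuous_iff_continuousAt.mpr fun x => (hderiv x).continuousAt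
  -- integrability of |u|^(2n+2), |u'|^(2n+2)
  have habs : ∀ v : ℝ → ℝ, MemLp v ((2 * n + 2 : ℕ) : ℝ≥0∞) (volume : Measure ℝ) →
      Integrable (fun x => |v x| ^ (2*n+2)) := by
    intro v hv
    have h := hv.integrable_norm_rpow (by positivity) (ENNReal.natCast_ne_top _)
    have he : ∀ x : ℝ, ‖v x‖ ^ (((2 * n + 2 : ℕ) : ℝ≥0∞)).toReal = |v x| ^ (2*n+2) := by
      intro x
      rw [ENNReal.toReal_natCast, Real.rpow_natCast, Real.norm_eq_abs]
    simpa only [he] using h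
  have hu_abs := habs u hu_mem'
  have hu'_abs := habs u' hu'_mem'
  -- main integrability: u^p * u'^q for p + q = 2n+2
  have hmain : ∀ p q : ℕ, p + q = 2*n+2 → Integrable (fun x => u x ^ p * u' x ^ q) := by
    intro p q hpq
    refine (hu_abs.add hu'_abs).mono' ?_ ?_
    · exact (((hu_cont.pow p).mul (hu'_cont.pow q))).aestronglyMeasurable
    · refine Filter.Eventually.of_forall fun x => ?_
      rw [Real.norm_eq_abs]
      exact abs_pow_mul_pow_le (u x) (u' x) p q (2*n+2) hpq
  -- the F-integrand
  set Fi : ℝ → ℝ := fun x =>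
    (u x) ^ (2 * n + 2) +
      (∑ k ∈ Finset.Icc 1 n,
        (-1 : ℝ) ^ (k + 1) / (2 * (k : ℝ) - 1) * ((n + 1).choose k : ℝ) *
          (u x) ^ (2 * n - 2 * k + 2) * (u' x) ^ (2 * k)) +
      (-1 : ℝ) ^ n * (u' x) ^ (2 * n + 2) / (2 * (n : ℝ) + 1) with hFi
  have hFint : Integrable Fi := by
    rw [hFi]
    refine Integrable.add (Integrable.add ?_ ?_) ?_
    · simpa using hmain (2*n+2) 0 (by omega)
    · rw [show (fun x => ∑ k ∈ Finset.Icc 1 n,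
          (-1 : ℝ) ^ (k + 1) / (2 * (k : ℝ) - 1) * ((n + 1).choose k : ℝ) *
            (u x) ^ (2 * n - 2 * k + 2) * (u' x) ^ (2 * k))
          = (fun x => ∑ k ∈ Finset.Icc 1 n,
            ((-1 : ℝ) ^ (k + 1) / (2 * (k : ℝ) - 1) * ((n + 1).choose k : ℝ)) *
              ((u x) ^ (2 * n - 2 * k + 2) * (u' x) ^ (2 * k))) from by
        funext x; exact Finset.sum_congr rfl fun k _ => by ring]
      refine integrable_finset_sum _ fun k hk => ?_
      have hk' : k ≤ n := (Finset.mem_Icc.mp hk).2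
      exact (hmain (2*n-2*k+2) (2*k) (by omega)).const_mul _
    · rw [show (fun x => (-1 : ℝ) ^ n * (u' x) ^ (2 * n + 2) / (2 * (n : ℝ) + 1))
          = (fun x => ((-1 : ℝ) ^ n / (2 * (n : ℝ) + 1)) * ((u x) ^ 0 * (u' x) ^ (2*n+2))) from by
        funext x; ring]
      exact (hmain 0 (2*n+2) (by omega)).const_mul _
  have hw : Integrable (fun x => u x ^ (2*n+1) * u' x) := by
    simpa using hmain (2*n+1) 1 (by omega)
  -- FTC on half lines
  have hg : ∀ x : ℝ, HasDerivAt (fun y => u y ^ (2*n+2) / (2*(n:ℝ)+2))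
      (u x ^ (2*n+1) * u' x) x := by
    intro x
    have h1 := ((hderiv x).pow (2*n+2)).div_const (2*(n:ℝ)+2)
    refine h1.congr_deriv ?_
    rw [show 2*n+2-1 = 2*n+1 by omega]
    have : (2*(n:ℝ)+2) ≠ 0 := by positivity
    push_cast
    field_simp
  have htb : Tendsto (fun y => u y ^ (2*n+2) / (2*(n:ℝ)+2)) atBot (nhds 0) := by
    have := (hu_bot.pow (2*n+2)).div_const (2*(n:ℝ)+2)
    simpa using this
  have htt : Tendsto (fun y => u y ^ (2*n+2) / (2*(n:ℝ)+2)) atTop (nhds 0) := by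
    have := (hu_top.pow (2*n+2)).div_const (2*(n:ℝ)+2)
    simpa using this
  have hIic : ∫ x in Set.Iic ξ, u x ^ (2*n+1) * u' x = u ξ ^ (2*n+2) / (2*(n:ℝ)+2) := by
    have := integral_Iic_of_hasDerivAt_of_tendsto' (a := ξ)
      (fun x _ => hg x) hw.integrableOn htb
    simpa using this
  have hIoi : ∫ x in Set.Ioi ξ, u x ^ (2*n+1) * u' x = - (u ξ ^ (2*n+2) / (2*(n:ℝ)+2)) := by
    have := integral_Ioi_of_hasDerivAt_of_tendsto' (a := ξ)
      (fun x _ => hg x) hw.integrableOn htt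
    rw [this]
    ring
  -- pointwise identities
  have hfunC : ∀ x : ℝ, (u x - u' x) ^ 2 *
      ((u x) ^ (2 * n) +
        (∑ k ∈ Finset.Icc 1 (2 * n - 1), gmchC n k * (u x) ^ (2 * n - k) * (u' x) ^ k) +
        (-1 : ℝ) ^ n * (u' x) ^ (2 * n) / (2 * (n : ℝ) + 1))
      = Fi x - (2 - gmchC n 1) * ((u x) ^ (2*n+1) * u' x) := by
    intro x
    have h := keyid n hn (u x) (u' x)
    rw [hFi]
    linear_combination h
  have hfunD : ∀ x : ℝ, (u x + u' x) ^ 2 *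
      ((u x) ^ (2 * n) +
        (∑ k ∈ Finset.Icc 1 (2 * n - 1), gmchD n k * (u x) ^ (2 * n - k) * (u' x) ^ k) +
        (-1 : ℝ) ^ n * (u' x) ^ (2 * n) / (2 * (n : ℝ) + 1))
      = Fi x + (2 - gmchC n 1) * ((u x) ^ (2*n+1) * u' x) := by
    intro x
    have h := keyidD n hn (u x) (u' x)
    rw [hFi]
    linear_combination h
  have hIicInt : (∫ x in Set.Iic ξ,
      (u x - u' x) ^ 2 *
        ((u x) ^ (2 * n) +
          (∑ k ∈ Finset.Icc 1 (2 * n - 1), gmchC n k * (u x) ^ (2 * n - k) * (u' x) ^ k) +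
          (-1 : ℝ) ^ n * (u' x) ^ (2 * n) / (2 * (n : ℝ) + 1)))
      = (∫ x in Set.Iic ξ, Fi x)
        - (2 - gmchC n 1) * ∫ x in Set.Iic ξ, u x ^ (2*n+1) * u' x := by
    simp only [hfunC]
    rw [integral_sub hFint.integrableOn ((hw.integrableOn).const_mul _),
      integral_const_mul]
  have hIciInt : (∫ x in Set.Ici ξ,
      (u x + u' x) ^ 2 *
        ((u x) ^ (2 * n) +
          (∑ k ∈ Finset.Icc 1 (2 * n - 1), gmchD n k * (u x) ^ (2 * n - k) * (u' x) ^ k) +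
          (-1 : ℝ) ^ n * (u' x) ^ (2 * n) / (2 * (n : ℝ) + 1)))
      = (∫ x in Set.Ioi ξ, Fi x)
        + (2 - gmchC n 1) * ∫ x in Set.Ioi ξ, u x ^ (2*n+1) * u' x := by
    rw [MeasureTheory.integral_Ici_eq_integral_Ioi]
    simp only [hfunD]
    rw [integral_add hFint.integrableOn ((hw.integrableOn).const_mul _),
      integral_const_mul]
  have hsplit : (∫ x in Set.Iic ξ, Fi x) + (∫ x in Set.Ioi ξ, Fi x) = ∫ x, Fi x := by
    have h := MeasureTheory.integral_add_compl (measurableSet_Iic (a := ξ)) hFint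
    simpa [Set.compl_Iic] using h
  rw [hIicInt, hIciInt, hIic, hIoi, ← hsplit, hM]
  have hne : ((n:ℝ)+1) ≠ 0 := by positivity
  have hne2 : (2*(n:ℝ)+2) ≠ 0 := by positivity
  field_simp
  ring
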